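/- Let p > 0. A skew-evolution semiflow C = (φ,Φ) satisfies the discrete exponential instability property if and only if there exist a constant ρ < 0 and a sequence (α_n)_{n≥0} with α_n ≥ 1 such that Σ_{k=n}^{m} e^{-pρ(m-k)} ‖Φ(k,n,x)v‖^p ≤ α_m^p ‖Φ(m,n,x)v‖^p for all naturals m ≥ n and all (x,v) ∈ X × V. -/

import Mathlib

open Real Finset

/-- An evolution semiflow on `X`. -/
def IsEvolutionSemiflow {X : Type*} (φ : ℝ → ℝ → X → X) : Prop :=
  (∀ t x, 0 ≤ t → φ t t x = x) ∧
  ∀ t s t₀ x, 0 ≤ t₀ → t₀ ≤ s → s ≤ t → φ t s (φ s t₀ x) = φ t t₀ x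

/-- An evolution cocycle over an evolution semiflow `φ`. -/
def IsEvolutionCocycle {X V : Type*} [NormedAddCommGroup V] [NormedSpace ℝ V]
    (φ : ℝ → ℝ → X → X) (Φ : ℝ → ℝ → X → (V →L[ℝ] V)) : Prop :=
  (∀ t x, 0 ≤ t → Φ t t x = ContinuousLinearMap.id ℝ V) ∧
  ∀ t s t₀ x, 0 ≤ t₀ → t₀ ≤ s → s ≤ t →
    (Φ t s (φ s t₀ x)).comp (Φ s t₀ x) = Φ t t₀ x

theorem discrete_instable_iff_p_sum
    {X V : Type*} [MetricSpace X] [NormedAddCommGroup V] [NormedSpace ℝ V] [CompleteSpace V]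
    (φ : ℝ → ℝ → X → X) (Φ : ℝ → ℝ → X → (V →L[ℝ] V))
    (hφ : IsEvolutionSemiflow φ) (hΦ : IsEvolutionCocycle φ Φ)
    (p : ℝ) (hp : 0 < p) :
    (∃ ν > (0:ℝ), ∃ a : ℕ → ℝ, (∀ n, 1 ≤ a n) ∧
      ∀ m n n₀ : ℕ, n₀ ≤ n → n ≤ m → ∀ (x : X) (v : V),
        ‖Φ n n₀ x v‖ ≤ a m * Real.exp (-ν * ((m : ℝ) - (n : ℝ))) * ‖Φ m n₀ x v‖) ↔
    (∃ ρ < (0:ℝ), ∃ α : ℕ → ℝ, (∀ n, 1 ≤ α n) ∧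
      ∀ m n : ℕ, n ≤ m → ∀ (x : X) (v : V),
        ∑ k ∈ Finset.Icc n m,
            Real.exp (-p * ρ * ((m : ℝ) - (k : ℝ))) * ‖Φ k n x v‖ ^ p ≤
          (α m) ^ p * ‖Φ m n x v‖ ^ p) := by
  constructor
  · rintro ⟨ν, hν, a, ha1, ha⟩
    refine ⟨-ν, by linarith, fun m => ((m : ℝ) + 1) ^ (1/p) * a m, ?_, ?_⟩
    · intro n
      have h1 : (1:ℝ) ≤ ((n : ℝ) + 1) ^ (1/p) :=
        Real.one_le_rpow (by linarith [(Nat.cast_nonneg n : (0:ℝ) ≤ (n:ℝ))])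
          (by positivity)
      nlinarith [ha1 n]
    · intro m n hnm x v
      have hterm : ∀ k ∈ Finset.Icc n m,
          Real.exp (-p * (-ν) * ((m : ℝ) - (k : ℝ))) * ‖Φ k n x v‖ ^ p ≤
            a m ^ p * ‖Φ m n x v‖ ^ p := by
        intro k hk
        simp only [Finset.mem_Icc] at hk
        have h := ha m k n hk.1 hk.2 x v
        have hd : (0:ℝ) ≤ (m : ℝ) - (k : ℝ) := by
          have h' : ((k:ℝ)) ≤ (m:ℝ) := Nat.cast_le.mpr hk.2
          linarith
        have hnn : (0:ℝ) ≤ ‖Φ k n x v‖ := norm_nonneg _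
        have h2 : ‖Φ k n x v‖ ^ p ≤
            (a m * Real.exp (-ν * ((m : ℝ) - (k : ℝ))) * ‖Φ m n x v‖) ^ p :=
          Real.rpow_le_rpow hnn h hp.le
        have h3 : (a m * Real.exp (-ν * ((m : ℝ) - (k : ℝ))) * ‖Φ m n x v‖) ^ p =
            a m ^ p * Real.exp (-ν * ((m : ℝ) - (k : ℝ))) ^ p * ‖Φ m n x v‖ ^ p := by
          rw [Real.mul_rpow (mul_nonneg (by linarith [ha1 m]) (Real.exp_pos _).le)
              (norm_nonneg _),
            Real.mul_rpow (by linarith [ha1 m]) (Real.exp_pos _).le]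
        have h4 : Real.exp (-ν * ((m : ℝ) - (k : ℝ))) ^ p =
            Real.exp (-ν * ((m : ℝ) - (k : ℝ)) * p) := (Real.exp_mul _ _).symm
        rw [h3, h4] at h2
        have h5 : Real.exp (-p * (-ν) * ((m : ℝ) - (k : ℝ))) *
            Real.exp (-ν * ((m : ℝ) - (k : ℝ)) * p) = 1 := by
          rw [← Real.exp_add]; ring_nf; exact Real.exp_zero
        calc Real.exp (-p * (-ν) * ((m : ℝ) - (k : ℝ))) * ‖Φ k n x v‖ ^ p
            ≤ Real.exp (-p * (-ν) * ((m : ℝ) - (k : ℝ))) *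
              (a m ^ p * Real.exp (-ν * ((m : ℝ) - (k : ℝ)) * p) * ‖Φ m n x v‖ ^ p) :=
              mul_le_mul_of_nonneg_left h2 (Real.exp_pos _).le
          _ = (Real.exp (-p * (-ν) * ((m : ℝ) - (k : ℝ))) *
              Real.exp (-ν * ((m : ℝ) - (k : ℝ)) * p)) * (a m ^ p * ‖Φ m n x v‖ ^ p) := by
              ring
          _ = a m ^ p * ‖Φ m n x v‖ ^ p := by rw [h5, one_mul]
      have hsum := Finset.sum_le_sum hterm
      rw [Finset.sum_const, Nat.card_Icc] at hsum
      have hcard : ((m + 1 - n : ℕ) : ℝ) ≤ (m : ℝ) + 1 := by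
        have : m + 1 - n ≤ m + 1 := Nat.sub_le _ _
        push_cast [this]
        exact_mod_cast Nat.cast_le.mpr this
      have hαp : (((m : ℝ) + 1) ^ (1/p) * a m) ^ p = ((m : ℝ) + 1) * a m ^ p := by
        rw [Real.mul_rpow (by positivity) (by linarith [ha1 m]),
          ← Real.rpow_mul (by positivity), one_div_mul_cancel hp.ne',
          Real.rpow_one]
      rw [hαp]
      have hc : (0:ℝ) ≤ a m ^ p * ‖Φ m n x v‖ ^ p :=
        mul_nonneg (Real.rpow_nonneg (by linarith [ha1 m]) p)
          (Real.rpow_nonneg (norm_nonneg _) p)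
      calc ∑ k ∈ Finset.Icc n m,
            Real.exp (-p * (-ν) * ((m : ℝ) - (k : ℝ))) * ‖Φ k n x v‖ ^ p
          ≤ (m + 1 - n : ℕ) • (a m ^ p * ‖Φ m n x v‖ ^ p) := hsum
        _ = ((m + 1 - n : ℕ) : ℝ) * (a m ^ p * ‖Φ m n x v‖ ^ p) := by
            rw [nsmul_eq_mul]
        _ ≤ ((m : ℝ) + 1) * (a m ^ p * ‖Φ m n x v‖ ^ p) :=
            mul_le_mul_of_nonneg_right hcard hc
        _ = ((m : ℝ) + 1) * a m ^ p * ‖Φ m n x v‖ ^ p := by ring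
  · rintro ⟨ρ, hρ, α, hα1, hα⟩
    refine ⟨-ρ, by linarith, α, hα1, ?_⟩
    intro m n n₀ hn₀n hnm x v
    set y := φ n n₀ x with hy
    set w := Φ n n₀ x v with hw
    have h := hα m n hnm y v
    clear h
    have hsum := hα m n hnm y w
    -- cocycle identities
    have hid : Φ n n (y) w = w := by
      rw [hΦ.1 n y (by positivity)]; rfl
    have hcomp : ∀ k : ℕ, n ≤ k → Φ k n y w = Φ k n₀ x v := by
      intro k hk
      have := hΦ.2 k n n₀ x (by positivity) (by exact_mod_cast hn₀n)
        (by exact_mod_cast hk)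
      calc Φ k n y w = ((Φ k n (φ n n₀ x)).comp (Φ n n₀ x)) v := rfl
        _ = Φ k n₀ x v := by rw [this]
    -- single term bound
    have hmem : n ∈ Finset.Icc n m := Finset.mem_Icc.mpr ⟨le_refl _, hnm⟩
    have hnonneg : ∀ k ∈ Finset.Icc n m,
        0 ≤ Real.exp (-p * ρ * ((m : ℝ) - (k : ℝ))) * ‖Φ k n y w‖ ^ p := by
      intro k _; positivity
    have hsingle := Finset.single_le_sum hnonneg hmem
    have key : Real.exp (-p * ρ * ((m : ℝ) - (n : ℝ))) * ‖Φ n n₀ x v‖ ^ p ≤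
        α m ^ p * ‖Φ m n₀ x v‖ ^ p := by
      have := le_trans hsingle hsum
      rwa [hid, hw, hcomp m hnm] at this
    -- take p-th roots
    have hA : (Real.exp (-ρ * ((m : ℝ) - (n : ℝ))) * ‖Φ n n₀ x v‖) ^ p =
        Real.exp (-p * ρ * ((m : ℝ) - (n : ℝ))) * ‖Φ n n₀ x v‖ ^ p := by
      rw [Real.mul_rpow (Real.exp_pos _).le (norm_nonneg _), ← Real.exp_mul]
      ring_nf
    have hB : (α m * ‖Φ m n₀ x v‖) ^ p = α m ^ p * ‖Φ m n₀ x v‖ ^ p :=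
      Real.mul_rpow (by linarith [hα1 m]) (norm_nonneg _)
    have hAB : (Real.exp (-ρ * ((m : ℝ) - (n : ℝ))) * ‖Φ n n₀ x v‖) ^ p ≤
        (α m * ‖Φ m n₀ x v‖) ^ p := by rw [hA, hB]; exact key
    have hroot : Real.exp (-ρ * ((m : ℝ) - (n : ℝ))) * ‖Φ n n₀ x v‖ ≤
        α m * ‖Φ m n₀ x v‖ := by
      by_contra hcon
      push_neg at hcon
      exact absurd hAB (not_le.mpr (Real.rpow_lt_rpow
        (mul_nonneg (by linarith [hα1 m]) (norm_nonneg _)) hcon hp))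
    have hgoal : ‖Φ n n₀ x v‖ ≤
        α m * Real.exp (ρ * ((m : ℝ) - (n : ℝ))) * ‖Φ m n₀ x v‖ := by
      calc ‖Φ n n₀ x v‖
          = Real.exp (ρ * ((m : ℝ) - (n : ℝ))) *
            (Real.exp (-ρ * ((m : ℝ) - (n : ℝ))) * ‖Φ n n₀ x v‖) := by
            rw [← mul_assoc, ← Real.exp_add,
              show ρ * ((m : ℝ) - (n : ℝ)) + -ρ * ((m : ℝ) - (n : ℝ)) = 0 by ring,
              Real.exp_zero, one_mul]
        _ ≤ Real.exp (ρ * ((m : ℝ) - (n : ℝ))) * (α m * ‖Φ m n₀ x v‖) :=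
            mul_le_mul_of_nonneg_left hroot (Real.exp_pos _).le
        _ = α m * Real.exp (ρ * ((m : ℝ) - (n : ℝ))) * ‖Φ m n₀ x v‖ := by ring
    simpa [hw, neg_neg] using hgoal
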